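/- arXiv:2508.02707 — 6 statements merged into one kernel-verified Lean document; each statement's English description precedes it below -/
import Mathlib

section
/- Let ψ, ω : ℝ² → ℝ be continuously differentiable and compactly supported, with ψ twice continuously differentiable. Then ∫_{ℝ²} {ψ,ω}(x)·ψ(x) dμ(x) = 0. -/
open MeasureTheory

/-- The Poisson bracket `{f,g} = ∂₁f ∂₂g − ∂₂f ∂₁g = ∇⊥f · ∇g` on `ℝ²`. -/
noncomputable def poissonBracket (f g : ℝ × ℝ → ℝ) (x : ℝ × ℝ) : ℝ :=
  fderiv ℝ f x (1, 0) * fderiv ℝ g x (0, 1) - fderiv ℝ f x (0, 1) * fderiv ℝ g x (1, 0)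

/-- The integral over `ℝ` of the derivative of a `C¹` compactly supported function vanishes. -/
lemma aux_integral_deriv_eq_zero (f : ℝ → ℝ) (hf : ContDiff ℝ 1 f)
    (hsupp : HasCompactSupport f) : ∫ x, deriv f x = 0 := by
  have hint : Integrable (deriv f) :=
    (hf.continuous_deriv le_rfl).integrable_of_hasCompactSupport hsupp.deriv
  have h1 := hsupp.integral_Iic_deriv_eq hf 0
  have h2 := hsupp.integral_Ioi_deriv_eq hf 0
  rw [← intervalIntegral.integral_Iic_add_Ioi hint.integrableOn hint.integrableOn, h1, h2]
  ring

/-- Slices of compactly supported functions on `ℝ × ℝ` in the second variable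
have compact support. -/
lemma aux_slice_supp_snd (F : ℝ × ℝ → ℝ) (hsupp : HasCompactSupport F) (a : ℝ) :
    HasCompactSupport (fun y => F (a, y)) := by
  have hsub : tsupport (fun y => F (a, y)) ⊆ Prod.snd '' tsupport F := by
    have h1 : Function.support (fun y => F (a, y)) ⊆ Prod.snd '' tsupport F := by
      intro y hy
      exact ⟨(a, y), subset_tsupport F hy, rfl⟩
    exact closure_minimal h1 ((hsupp.image continuous_snd).isClosed)
  exact IsCompact.of_isClosed_subset (hsupp.image continuous_snd) isClosed_closure hsub

/-- Slices of compactly supported functions on `ℝ × ℝ` in the first variable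
have compact support. -/
lemma aux_slice_supp_fst (F : ℝ × ℝ → ℝ) (hsupp : HasCompactSupport F) (b : ℝ) :
    HasCompactSupport (fun x => F (x, b)) := by
  have hsub : tsupport (fun x => F (x, b)) ⊆ Prod.fst '' tsupport F := by
    have h1 : Function.support (fun x => F (x, b)) ⊆ Prod.fst '' tsupport F := by
      intro x hx
      exact ⟨(x, b), subset_tsupport F hx, rfl⟩
    exact closure_minimal h1 ((hsupp.image continuous_fst).isClosed)
  exact IsCompact.of_isClosed_subset (hsupp.image continuous_fst) isClosed_closure hsub

lemma aux_integral_fderiv_snd (F : ℝ × ℝ → ℝ) (hF : ContDiff ℝ 1 F)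
    (hsupp : HasCompactSupport F) : ∫ x, fderiv ℝ F x (0, 1) = 0 := by
  have hcont : Continuous fun x => fderiv ℝ F x (0, 1) :=
    ((hF.fderiv_right (m := 0) le_rfl).clm_apply contDiff_const).continuous
  have hint : Integrable (fun x => fderiv ℝ F x (0, 1)) :=
    hcont.integrable_of_hasCompactSupport (hsupp.fderiv_apply ℝ (0, 1))
  rw [Measure.volume_eq_prod] at hint ⊢
  rw [integral_prod _ hint]
  have hinner : ∀ a : ℝ, ∫ y, fderiv ℝ F (a, y) (0, 1) = 0 := by
    intro a
    have hslice : ContDiff ℝ 1 fun y => F (a, y) := hF.comp (contDiff_const.prodMk contDiff_id)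
    have hd : ∀ y : ℝ, HasDerivAt (fun y => F (a, y)) (fderiv ℝ F (a, y) (0, 1)) y := by
      intro y
      have h1 : HasDerivAt (fun y : ℝ => ((a : ℝ), y)) ((0 : ℝ), (1 : ℝ)) y :=
        (hasDerivAt_const y a).prodMk (hasDerivAt_id y)
      exact ((hF.differentiable one_ne_zero (a, y)).hasFDerivAt).comp_hasDerivAt y h1
    have : (fun y => fderiv ℝ F (a, y) (0, 1)) = deriv fun y => F (a, y) := by
      ext y; exact ((hd y).deriv).symm
    rw [this]
    exact aux_integral_deriv_eq_zero _ hslice (aux_slice_supp_snd F hsupp a)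
  simp [hinner]

lemma aux_integral_fderiv_fst (F : ℝ × ℝ → ℝ) (hF : ContDiff ℝ 1 F)
    (hsupp : HasCompactSupport F) : ∫ x, fderiv ℝ F x (1, 0) = 0 := by
  have hcont : Continuous fun x => fderiv ℝ F x (1, 0) :=
    ((hF.fderiv_right (m := 0) le_rfl).clm_apply contDiff_const).continuous
  have hint : Integrable (fun x => fderiv ℝ F x (1, 0)) :=
    hcont.integrable_of_hasCompactSupport (hsupp.fderiv_apply ℝ (1, 0))
  rw [Measure.volume_eq_prod] at hint ⊢
  rw [integral_prod_symm _ hint]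
  have hinner : ∀ b : ℝ, ∫ x, fderiv ℝ F (x, b) (1, 0) = 0 := by
    intro b
    have hslice : ContDiff ℝ 1 fun x => F (x, b) := hF.comp (contDiff_id.prodMk contDiff_const)
    have hd : ∀ x : ℝ, HasDerivAt (fun x => F (x, b)) (fderiv ℝ F (x, b) (1, 0)) x := by
      intro x
      have h1 : HasDerivAt (fun x : ℝ => (x, (b : ℝ))) ((1 : ℝ), (0 : ℝ)) x :=
        (hasDerivAt_id x).prodMk (hasDerivAt_const x b)
      exact ((hF.differentiable one_ne_zero (x, b)).hasFDerivAt).comp_hasDerivAt x h1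
    have : (fun x => fderiv ℝ F (x, b) (1, 0)) = deriv fun x => F (x, b) := by
      ext x; exact ((hd x).deriv).symm
    rw [this]
    exact aux_integral_deriv_eq_zero _ hslice (aux_slice_supp_fst F hsupp b)
  simp [hinner]

theorem integral_poissonBracket_self_eq_zero (ψ ω : ℝ × ℝ → ℝ)
    (hψ : ContDiff ℝ 2 ψ) (hω : ContDiff ℝ 1 ω)
    (hψsupp : HasCompactSupport ψ) (hωsupp : HasCompactSupport ω) :
    ∫ x, poissonBracket ψ ω x * ψ x = 0 := by
  have hψ1 : ContDiff ℝ 1 ψ := hψ.of_le one_le_two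
  have hdψ : ContDiff ℝ 1 (fderiv ℝ ψ) := hψ.fderiv_right (le_refl 2)
  have hdψ1 : ContDiff ℝ 1 fun x => fderiv ℝ ψ x (1, 0) := hdψ.clm_apply contDiff_const
  have hdψ2 : ContDiff ℝ 1 fun x => fderiv ℝ ψ x (0, 1) := hdψ.clm_apply contDiff_const
  set F : ℝ × ℝ → ℝ := fun x => ψ x * (fderiv ℝ ψ x (1, 0) * ω x) with hFdef
  set G : ℝ × ℝ → ℝ := fun x => ψ x * (fderiv ℝ ψ x (0, 1) * ω x) with hGdef
  have hF : ContDiff ℝ 1 F := hψ1.mul (hdψ1.mul hω)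
  have hG : ContDiff ℝ 1 G := hψ1.mul (hdψ2.mul hω)
  have hFsupp : HasCompactSupport F := by
    apply hψsupp.mono'
    intro x hx
    apply subset_tsupport ψ
    simp only [hFdef, Function.mem_support] at hx
    simp only [Function.mem_support]
    intro h0
    apply hx
    rw [h0]
    ring
  have hGsupp : HasCompactSupport G := by
    apply hψsupp.mono'
    intro x hx
    apply subset_tsupport ψ
    simp only [hGdef, Function.mem_support] at hx
    simp only [Function.mem_support]
    intro h0
    apply hx
    rw [h0]
    ring
  have hkey : ∀ x, poissonBracket ψ ω x * ψ x
      = fderiv ℝ F x (0, 1) - fderiv ℝ G x (1, 0) := by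
    intro x
    have hsymm : IsSymmSndFDerivAt ℝ ψ x := hψ.contDiffAt.isSymmSndFDerivAt (by simp)
    have hψd : HasFDerivAt ψ (fderiv ℝ ψ x) x := (hψ1.differentiable one_ne_zero x).hasFDerivAt
    have hωd : HasFDerivAt ω (fderiv ℝ ω x) x := (hω.differentiable one_ne_zero x).hasFDerivAt
    have hdd : HasFDerivAt (fderiv ℝ ψ) (fderiv ℝ (fderiv ℝ ψ) x) x :=
      (hdψ.differentiable one_ne_zero x).hasFDerivAt
    have h1 : HasFDerivAt (fun y => fderiv ℝ ψ y ((1 : ℝ), (0 : ℝ)))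
        ((fderiv ℝ ψ x).comp (0 : ℝ × ℝ →L[ℝ] ℝ × ℝ)
          + (fderiv ℝ (fderiv ℝ ψ) x).flip (1, 0)) x :=
      hdd.clm_apply (hasFDerivAt_const (1, 0) x)
    have h2 : HasFDerivAt (fun y => fderiv ℝ ψ y ((0 : ℝ), (1 : ℝ)))
        ((fderiv ℝ ψ x).comp (0 : ℝ × ℝ →L[ℝ] ℝ × ℝ)
          + (fderiv ℝ (fderiv ℝ ψ) x).flip (0, 1)) x :=
      hdd.clm_apply (hasFDerivAt_const (0, 1) x)
    have hF' : HasFDerivAt (fun x => ψ x * (fderiv ℝ ψ x (1, 0) * ω x)) _ x :=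
      hψd.mul (h1.mul hωd)
    have hG' : HasFDerivAt (fun x => ψ x * (fderiv ℝ ψ x (0, 1) * ω x)) _ x :=
      hψd.mul (h2.mul hωd)
    rw [hFdef, hGdef, hF'.fderiv, hG'.fderiv]
    simp only [ContinuousLinearMap.add_apply, ContinuousLinearMap.smul_apply,
      ContinuousLinearMap.comp_apply, ContinuousLinearMap.flip_apply,
      ContinuousLinearMap.zero_apply, map_zero, smul_eq_mul, zero_add, add_zero,
      poissonBracket, Pi.mul_apply]
    rw [hsymm.eq (0, 1) (1, 0)]
    ring
  have hintF : Integrable fun x => fderiv ℝ F x (0, 1) :=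
    (((hF.fderiv_right (m := 0) le_rfl).clm_apply contDiff_const).continuous
      ).integrable_of_hasCompactSupport (hFsupp.fderiv_apply ℝ (0, 1))
  have hintG : Integrable fun x => fderiv ℝ G x (1, 0) :=
    (((hG.fderiv_right (m := 0) le_rfl).clm_apply contDiff_const).continuous
      ).integrable_of_hasCompactSupport (hGsupp.fderiv_apply ℝ (1, 0))
  calc ∫ x, poissonBracket ψ ω x * ψ x
      = ∫ x, (fderiv ℝ F x (0, 1) - fderiv ℝ G x (1, 0)) := by simp_rw [hkey]
    _ = (∫ x, fderiv ℝ F x (0, 1)) - ∫ x, fderiv ℝ G x (1, 0) := integral_sub hintF hintG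
    _ = 0 := by
        rw [aux_integral_fderiv_snd F hF hFsupp, aux_integral_fderiv_fst G hG hGsupp, sub_zero]
end

section
/- Let M ∈ ℕ, let ψ_1, …, ψ_M : ℝ² → ℝ be twice continuously differentiable and compactly supported, and let f : ℝ² → ℝ be twice continuously differentiable and compactly supported. Then ∫_{ℝ²} (Λ_M f)(x)·f(x) dμ(x) = −(1/2) Σ_{ℓ=1}^{M} ∫_{ℝ²} {ψ_ℓ,f}(x)² dμ(x) ≤ 0, where Λ_M f = (1/2) Σ_{ℓ=1}^{M} {ψ_ℓ,{ψ_ℓ,f}}. -/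
open MeasureTheory

/-- The noise-induced differential elliptic (NIDE) operator
`Λ_M f = (1/2) Σ_{ℓ=1}^M {ψ_ℓ, {ψ_ℓ, f}}`. -/
noncomputable def NIDE (M : ℕ) (ψ : Fin M → ℝ × ℝ → ℝ) (f : ℝ × ℝ → ℝ) (x : ℝ × ℝ) : ℝ :=
  (1 / 2) * ∑ ℓ : Fin M, poissonBracket (ψ ℓ) (poissonBracket (ψ ℓ) f) x

section aux

variable {p u v f g : ℝ × ℝ → ℝ}

lemma aux_sub_supp (hf : HasCompactSupport f) (hg : HasCompactSupport g) :
    HasCompactSupport (fun x => f x - g x) := by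
  rw [hasCompactSupport_iff_eventuallyEq] at *
  filter_upwards [hf, hg] with x h1 h2
  simp [h1, h2]

lemma aux_pd_contDiff (hf : ContDiff ℝ 2 f) (w : ℝ × ℝ) :
    ContDiff ℝ 1 (fun x => fderiv ℝ f x w) :=
  (hf.fderiv_right (by norm_num)).clm_apply contDiff_const

lemma aux_pb_contDiff (hp : ContDiff ℝ 2 p) (hf : ContDiff ℝ 2 f) :
    ContDiff ℝ 1 (poissonBracket p f) :=
  ((aux_pd_contDiff hp _).mul (aux_pd_contDiff hf _)).sub
    ((aux_pd_contDiff hp _).mul (aux_pd_contDiff hf _))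

lemma aux_pb_supp (hf : HasCompactSupport f) : HasCompactSupport (poissonBracket p f) := by
  have h1 : HasCompactSupport (fun x => fderiv ℝ p x (1, 0) * fderiv ℝ f x (0, 1)) :=
    HasCompactSupport.mul_left (hf.fderiv_apply ℝ (0, 1))
  have h2 : HasCompactSupport (fun x => fderiv ℝ p x (0, 1) * fderiv ℝ f x (1, 0)) :=
    HasCompactSupport.mul_left (hf.fderiv_apply ℝ (1, 0))
  exact aux_sub_supp h1 h2

lemma aux_pd_cont (hf : ContDiff ℝ 1 f) (w : ℝ × ℝ) :
    Continuous (fun x => fderiv ℝ f x w) :=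
  ((ContinuousLinearMap.apply ℝ ℝ w).continuous).comp (hf.continuous_fderiv one_ne_zero)

/-- Integration by parts on `ℝ²`. -/
lemma aux_ibp (ha : ContDiff ℝ 1 f) (hb : ContDiff ℝ 1 g) (hbs : HasCompactSupport g)
    (w : ℝ × ℝ) :
    ∫ x, f x * fderiv ℝ g x w = - ∫ x, fderiv ℝ f x w * g x := by
  apply integral_mul_fderiv_eq_neg_fderiv_mul_of_integrable
  · exact ((aux_pd_cont ha w).mul hb.continuous).integrable_of_hasCompactSupport
      (HasCompactSupport.mul_left hbs)
  · exact (ha.continuous.mul (aux_pd_cont hb w)).integrable_of_hasCompactSupport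
      (HasCompactSupport.mul_left (hbs.fderiv_apply ℝ w))
  · exact (ha.continuous.mul hb.continuous).integrable_of_hasCompactSupport
      (HasCompactSupport.mul_left hbs)
  · exact fun x _ => ha.differentiable one_ne_zero x
  · exact fun x _ => hb.differentiable one_ne_zero x

/-- Schwarz symmetry of second derivatives. -/
lemma aux_schwarz (hp : ContDiff ℝ 2 p) (x v w : ℝ × ℝ) :
    fderiv ℝ (fun y => fderiv ℝ p y v) x w = fderiv ℝ (fun y => fderiv ℝ p y w) x v := by
  have hd : DifferentiableAt ℝ (fderiv ℝ p) x :=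
    ((hp.fderiv_right (m := 1) (by norm_num)).differentiable one_ne_zero) x
  have h1 : fderiv ℝ (fun y => fderiv ℝ p y v) x w = fderiv ℝ (fderiv ℝ p) x w v := by
    rw [fderiv_clm_apply hd (differentiableAt_const v)]
    simp
  have h2 : fderiv ℝ (fun y => fderiv ℝ p y w) x v = fderiv ℝ (fderiv ℝ p) x v w := by
    rw [fderiv_clm_apply hd (differentiableAt_const w)]
    simp
  rw [h1, h2]
  exact ((hp.contDiffAt).isSymmSndFDerivAt (by simp [minSmoothness_of_isRCLikeNormedField])).eq w v

/-- The integral of a Poisson bracket against a `C²` compactly supported stream function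
vanishes. -/
lemma aux_int_pb_zero (hp : ContDiff ℝ 2 p) (hF : ContDiff ℝ 1 f)
    (hFs : HasCompactSupport f) : ∫ x, poissonBracket p f x = 0 := by
  have i1 : Integrable (fun x => fderiv ℝ p x (1, 0) * fderiv ℝ f x (0, 1)) :=
    ((aux_pd_cont (hp.of_le one_le_two) _).mul (aux_pd_cont hF _)).integrable_of_hasCompactSupport
      (HasCompactSupport.mul_left (hFs.fderiv_apply ℝ _))
  have i2 : Integrable (fun x => fderiv ℝ p x (0, 1) * fderiv ℝ f x (1, 0)) :=
    ((aux_pd_cont (hp.of_le one_le_two) _).mul (aux_pd_cont hF _)).integrable_of_hasCompactSupport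
      (HasCompactSupport.mul_left (hFs.fderiv_apply ℝ _))
  have h1 := aux_ibp (aux_pd_contDiff hp (1, 0)) hF hFs (0, 1)
  have h2 := aux_ibp (aux_pd_contDiff hp (0, 1)) hF hFs (1, 0)
  have hs : ∀ x, fderiv ℝ (fun y => fderiv ℝ p y (1, 0)) x (0, 1) * f x
      = fderiv ℝ (fun y => fderiv ℝ p y (0, 1)) x (1, 0) * f x := fun x => by
    rw [aux_schwarz hp x (1, 0) (0, 1)]
  unfold poissonBracket
  rw [integral_sub i1 i2, h1, h2]
  simp only [hs]
  ring

/-- Leibniz rule for the Poisson bracket. -/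
lemma aux_pb_mul (hu : Differentiable ℝ u) (hv : Differentiable ℝ v) (x : ℝ × ℝ) :
    poissonBracket p (fun y => u y * v y) x
      = poissonBracket p u x * v x + u x * poissonBracket p v x := by
  unfold poissonBracket
  rw [fderiv_fun_mul (hu x) (hv x)]
  simp only [ContinuousLinearMap.add_apply, ContinuousLinearMap.coe_smul',
    Pi.smul_apply, smul_eq_mul]
  ring

/-- Skew-adjointness of `{p, ·}`. -/
lemma aux_pb_adjoint (hp : ContDiff ℝ 2 p) (hu : ContDiff ℝ 1 u)
    (hus : HasCompactSupport u) (hv : ContDiff ℝ 1 v) :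
    ∫ x, poissonBracket p u x * v x = - ∫ x, u x * poissonBracket p v x := by
  have hpc : Continuous fun x => poissonBracket p u x :=
    ((aux_pd_cont (hp.of_le one_le_two) _).mul (aux_pd_cont hu _)).sub
      ((aux_pd_cont (hp.of_le one_le_two) _).mul (aux_pd_cont hu _))
  have hpvc : Continuous fun x => poissonBracket p v x :=
    ((aux_pd_cont (hp.of_le one_le_two) _).mul (aux_pd_cont hv _)).sub
      ((aux_pd_cont (hp.of_le one_le_two) _).mul (aux_pd_cont hv _))
  have i1 : Integrable (fun x => poissonBracket p u x * v x) :=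
    (hpc.mul hv.continuous).integrable_of_hasCompactSupport
      ((aux_pb_supp hus).mul_right)
  have i2 : Integrable (fun x => u x * poissonBracket p v x) :=
    (hu.continuous.mul hpvc).integrable_of_hasCompactSupport hus.mul_right
  have hz : ∫ x, poissonBracket p (fun y => u y * v y) x = 0 :=
    aux_int_pb_zero hp (hu.mul hv) hus.mul_right
  have hz' : ∫ x, (poissonBracket p u x * v x + u x * poissonBracket p v x) = 0 := by
    rw [← hz]
    exact integral_congr_ae (Filter.Eventually.of_forall fun x =>
      (aux_pb_mul (hu.differentiable one_ne_zero) (hv.differentiable one_ne_zero) x).symm)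
  rw [integral_add i1 i2] at hz'
  linarith

end aux

theorem NIDE_dissipates_enstrophy (M : ℕ) (ψ : Fin M → ℝ × ℝ → ℝ)
    (hψ : ∀ ℓ, ContDiff ℝ 2 (ψ ℓ)) (hψsupp : ∀ ℓ, HasCompactSupport (ψ ℓ))
    (f : ℝ × ℝ → ℝ) (hf : ContDiff ℝ 2 f) (hfsupp : HasCompactSupport f) :
    (∫ x, NIDE M ψ f x * f x
        = -(1 / 2) * ∑ ℓ : Fin M, ∫ x, (poissonBracket (ψ ℓ) f x) ^ 2) ∧
    (∫ x, NIDE M ψ f x * f x) ≤ 0 := by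
  have key : ∀ ℓ : Fin M, ∫ x, poissonBracket (ψ ℓ) (poissonBracket (ψ ℓ) f) x * f x
      = - ∫ x, (poissonBracket (ψ ℓ) f x) ^ 2 := by
    intro ℓ
    have h := aux_pb_adjoint (hψ ℓ) (aux_pb_contDiff (hψ ℓ) hf) (aux_pb_supp hfsupp)
      (hf.of_le one_le_two)
    rw [h]
    congr 1
    exact integral_congr_ae (Filter.Eventually.of_forall fun x => by ring)
  have cont : ∀ ℓ : Fin M,
      Continuous fun x => poissonBracket (ψ ℓ) (poissonBracket (ψ ℓ) f) x * f x := by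
    intro ℓ
    have h1 : ContDiff ℝ 1 (poissonBracket (ψ ℓ) f) := aux_pb_contDiff (hψ ℓ) hf
    exact (((aux_pd_cont ((hψ ℓ).of_le one_le_two) _).mul (aux_pd_cont h1 _)).sub
      ((aux_pd_cont ((hψ ℓ).of_le one_le_two) _).mul (aux_pd_cont h1 _))).mul hf.continuous
  have integ : ∀ ℓ : Fin M,
      Integrable (fun x => poissonBracket (ψ ℓ) (poissonBracket (ψ ℓ) f) x * f x) := fun ℓ =>
    (cont ℓ).integrable_of_hasCompactSupport (HasCompactSupport.mul_left hfsupp)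
  have main : ∫ x, NIDE M ψ f x * f x
      = -(1 / 2) * ∑ ℓ : Fin M, ∫ x, (poissonBracket (ψ ℓ) f x) ^ 2 := by
    have step1 : ∀ x, NIDE M ψ f x * f x
        = (1 / 2 : ℝ) * ∑ ℓ : Fin M,
          poissonBracket (ψ ℓ) (poissonBracket (ψ ℓ) f) x * f x := by
      intro x
      unfold NIDE
      rw [mul_assoc, Finset.sum_mul]
    calc ∫ x, NIDE M ψ f x * f x
        = ∫ x, (1 / 2 : ℝ) * ∑ ℓ : Fin M,
            poissonBracket (ψ ℓ) (poissonBracket (ψ ℓ) f) x * f x := by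
          exact integral_congr_ae (Filter.Eventually.of_forall step1)
      _ = (1 / 2 : ℝ) * ∫ x, ∑ ℓ : Fin M,
            poissonBracket (ψ ℓ) (poissonBracket (ψ ℓ) f) x * f x := integral_const_mul _ _
      _ = (1 / 2 : ℝ) * ∑ ℓ : Fin M,
            ∫ x, poissonBracket (ψ ℓ) (poissonBracket (ψ ℓ) f) x * f x := by
          rw [integral_finset_sum _ (fun ℓ _ => integ ℓ)]
      _ = (1 / 2 : ℝ) * ∑ ℓ : Fin M, -∫ x, (poissonBracket (ψ ℓ) f x) ^ 2 := by
          rw [Finset.sum_congr rfl (fun ℓ _ => key ℓ)]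
      _ = -(1 / 2) * ∑ ℓ : Fin M, ∫ x, (poissonBracket (ψ ℓ) f x) ^ 2 := by
          rw [Finset.sum_neg_distrib]; ring
  refine ⟨main, ?_⟩
  rw [main]
  have : (0 : ℝ) ≤ ∑ ℓ : Fin M, ∫ x, (poissonBracket (ψ ℓ) f x) ^ 2 :=
    Finset.sum_nonneg fun ℓ _ => integral_nonneg fun x => sq_nonneg _
  nlinarith
end

section
/- Let n ≥ 1, let B : ℝ → Matrix (Fin n) (Fin n) ℂ be any map, and let W : ℝ → Matrix (Fin n) (Fin n) ℂ be differentiable with W'(t) = B(t)·W(t) − W(t)·B(t) for all t ∈ ℝ. Then for every natural number k, the function t ↦ trace((W(t))^k) is constant on ℝ. -/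
open Matrix

attribute [local instance] Matrix.normedAddCommGroup Matrix.normedSpace

noncomputable def matMulCLM (n : ℕ) :
    Matrix (Fin n) (Fin n) ℂ →L[ℝ] Matrix (Fin n) (Fin n) ℂ →L[ℝ] Matrix (Fin n) (Fin n) ℂ :=
  LinearMap.toContinuousLinearMap
    ((LinearMap.toContinuousLinearMap :
        (Matrix (Fin n) (Fin n) ℂ →ₗ[ℝ] Matrix (Fin n) (Fin n) ℂ) ≃ₗ[ℝ]
          (Matrix (Fin n) (Fin n) ℂ →L[ℝ] Matrix (Fin n) (Fin n) ℂ)).toLinearMap ∘ₗ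
      (LinearMap.mul ℝ (Matrix (Fin n) (Fin n) ℂ)))

@[simp] lemma matMulCLM_apply (n : ℕ) (x y : Matrix (Fin n) (Fin n) ℂ) :
    matMulCLM n x y = x * y := rfl

lemma hasDerivAt_matMul {n : ℕ} {f g : ℝ → Matrix (Fin n) (Fin n) ℂ}
    {f' g' : Matrix (Fin n) (Fin n) ℂ} {t : ℝ}
    (hf : HasDerivAt f f' t) (hg : HasDerivAt g g' t) :
    HasDerivAt (fun s => f s * g s) (f' * g t + f t * g') t := by
  letI : NormedRing (Matrix (Fin n) (Fin n) ℂ) := Matrix.linftyOpNormedRing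
  letI : NormedAlgebra ℝ (Matrix (Fin n) (Fin n) ℂ) := Matrix.linftyOpNormedAlgebra
  exact hf.mul hg

noncomputable def traceCLM (n : ℕ) : Matrix (Fin n) (Fin n) ℂ →L[ℝ] ℂ :=
  LinearMap.toContinuousLinearMap
    ((Matrix.traceLinearMap (Fin n) ℂ ℂ).restrictScalars ℝ)

@[simp] lemma traceCLM_apply (n : ℕ) (x : Matrix (Fin n) (Fin n) ℂ) :
    traceCLM n x = x.trace := rfl

theorem isospectral_flow_trace_pow_const (n : ℕ) (hn : 1 ≤ n)
    (B W : ℝ → Matrix (Fin n) (Fin n) ℂ)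
    (hW : ∀ t : ℝ, HasDerivAt W (B t * W t - W t * B t) t) (k : ℕ) :
    ∀ s t : ℝ, (W t ^ k).trace = (W s ^ k).trace := by
  set C : ℝ → Matrix (Fin n) (Fin n) ℂ := fun t => B t * W t - W t * B t with hC
  -- derivative of W^k
  have hpow : ∀ (k : ℕ) (t : ℝ),
      HasDerivAt (fun s => W s ^ k)
        (∑ i ∈ Finset.range k, W t ^ i * C t * W t ^ (k - 1 - i)) t := by
    intro k
    induction k with
    | zero =>
      intro t
      simp only [pow_zero, Finset.range_zero, Finset.sum_empty]
      exact hasDerivAt_const t 1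
    | succ m ih =>
      intro t
      have h := hasDerivAt_matMul (ih t) (hW t)
      have harr : (fun s => W s ^ m * W s) = fun s => W s ^ (m + 1) := by
        funext s; rw [pow_succ]
      rw [harr] at h
      convert h using 1
      rw [Finset.sum_range_succ, Finset.sum_mul]
      congr 1
      · apply Finset.sum_congr rfl
        intro i hi
        have hi' : i < m := Finset.mem_range.mp hi
        have : m + 1 - 1 - i = (m - 1 - i) + 1 := by omega
        rw [this, pow_succ]
        simp only [mul_assoc]
      · have : m + 1 - 1 - m = 0 := by omega
        rw [this, pow_zero, mul_one]
  -- trace of the derivative is zero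
  have htr : ∀ (k : ℕ) (t : ℝ),
      (∑ i ∈ Finset.range k, W t ^ i * C t * W t ^ (k - 1 - i)).trace = 0 := by
    intro k t
    rw [Matrix.trace_sum]
    apply Finset.sum_eq_zero
    intro i hi
    have hi' : i < k := Finset.mem_range.mp hi
    have hsum : i + (k - 1 - i) = k - 1 := by omega
    rw [hC]
    simp only [sub_mul, mul_sub, Matrix.trace_sub]
    rw [sub_eq_zero]
    have h1 : W t ^ i * (B t * W t) * W t ^ (k - 1 - i)
        = W t ^ i * B t * W t ^ (k - 1 - i + 1) := by
      rw [pow_succ']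
      simp only [mul_assoc]
    have h2 : W t ^ i * (W t * B t) * W t ^ (k - 1 - i)
        = W t ^ (i + 1) * B t * W t ^ (k - 1 - i) := by
      rw [pow_succ]
      simp only [mul_assoc]
    rw [h1, h2]
    rw [Matrix.trace_mul_cycle, ← pow_add, Matrix.trace_mul_cycle, ← pow_add]
    have he : k - 1 - i + 1 + i = k - 1 - i + (i + 1) := by omega
    rw [he]
  -- trace(W^k) has derivative zero
  have hderiv : ∀ t : ℝ, HasDerivAt (fun s => (W s ^ k).trace) 0 t := by
    intro t
    have h := (traceCLM n).hasFDerivAt.comp_hasDerivAt t (hpow k t)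
    have h2 : HasDerivAt (fun s => (W s ^ k).trace)
        (traceCLM n (∑ i ∈ Finset.range k, W t ^ i * C t * W t ^ (k - 1 - i))) t := h
    rw [traceCLM_apply, htr k t] at h2
    exact h2
  intro s t
  exact is_const_of_deriv_eq_zero
    (fun x => (hderiv x).differentiableAt) (fun x => (hderiv x).deriv) t s
end

section
/- Let n ≥ 1, let B : ℝ → Matrix (Fin n) (Fin n) ℂ be any map, and let W : ℝ → Matrix (Fin n) (Fin n) ℂ be differentiable with W'(t) = B(t)·W(t) − W(t)·B(t) for all t ∈ ℝ. Then the characteristic polynomial of W(t) is independent of t: for all s, t ∈ ℝ, charpoly(W(t)) = charpoly(W(s)). -/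
open Matrix Polynomial Finset

attribute [local instance] Matrix.normedAddCommGroup Matrix.normedSpace

variable {n : ℕ}

lemma my_det_eq (A : Matrix (Fin n) (Fin n) ℂ) :
    A.det = ∑ σ : Equiv.Perm (Fin n), ((Equiv.Perm.sign σ : ℤ) : ℂ) * ∏ i, A i (σ i) := by
  rw [← det_transpose A, det_apply']
  refine Finset.sum_congr rfl fun σ _ => ?_
  simp [transpose_apply]

lemma my_updateRow_updateRow (A : Matrix (Fin n) (Fin n) ℂ) (i : Fin n) (r s : Fin n → ℂ) :
    (A.updateRow i r).updateRow i s = A.updateRow i s := by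
  ext a b
  rcases eq_or_ne a i with h | h
  · simp [h]
  · simp [updateRow_ne h]

lemma my_sum_updateRow_det (A N : Matrix (Fin n) (Fin n) ℂ) :
    ∑ i, (A.updateRow i (N i)).det = Matrix.trace (N * adjugate A) := by
  have h1 : ∀ i : Fin n, (A.updateRow i (N i)).det = ∑ j, N i j * adjugate A j i := by
    intro i
    rw [det_eq_sum_mul_adjugate_row (A.updateRow i (N i)) i]
    refine Finset.sum_congr rfl fun j _ => ?_
    rw [updateRow_self]
    congr 1
    rw [adjugate_apply, adjugate_apply, my_updateRow_updateRow]
  simp only [h1, Matrix.trace, Matrix.diag, Matrix.mul_apply]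

lemma my_trace_comm (A B : Matrix (Fin n) (Fin n) ℂ) :
    Matrix.trace ((B * A - A * B) * adjugate A) = 0 := by
  rw [sub_mul, Matrix.trace_sub, Matrix.mul_assoc B A, mul_adjugate, Matrix.mul_assoc A B,
    Matrix.trace_mul_comm A (B * adjugate A), Matrix.mul_assoc B (adjugate A) A,
    adjugate_mul, sub_self]

lemma my_det_hasDerivAt (M : ℝ → Matrix (Fin n) (Fin n) ℂ) (M' : Matrix (Fin n) (Fin n) ℂ)
    (t : ℝ) (h : ∀ i j, HasDerivAt (fun u => M u i j) (M' i j) t) :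
    HasDerivAt (fun u => (M u).det) (∑ i, ((M t).updateRow i (M' i)).det) t := by
  have key : HasDerivAt (fun u => ∑ σ : Equiv.Perm (Fin n),
      ((Equiv.Perm.sign σ : ℤ) : ℂ) * ∏ i, M u i (σ i))
      (∑ σ : Equiv.Perm (Fin n), ((Equiv.Perm.sign σ : ℤ) : ℂ) *
        ∑ k, (∏ j ∈ Finset.univ.erase k, M t j (σ j)) • M' k (σ k)) t := by
    apply HasDerivAt.fun_sum
    intro σ _
    exact (HasDerivAt.fun_finsetProd (fun i _ => h i (σ i))).const_mul _
  have e1 : (fun u => (M u).det) = fun u => ∑ σ : Equiv.Perm (Fin n),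
      ((Equiv.Perm.sign σ : ℤ) : ℂ) * ∏ i, M u i (σ i) := by
    funext u; exact my_det_eq (M u)
  rw [e1]
  convert key using 1
  simp only [Finset.mul_sum]
  rw [Finset.sum_comm]
  refine Finset.sum_congr rfl fun k _ => ?_
  rw [my_det_eq]
  refine Finset.sum_congr rfl fun σ _ => ?_
  congr 1
  rw [← Finset.mul_prod_erase Finset.univ _ (Finset.mem_univ k), updateRow_self,
    smul_eq_mul, mul_comm]
  congr 1
  exact Finset.prod_congr rfl fun j hj => by
    rw [updateRow_ne (Finset.ne_of_mem_erase hj)]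

lemma my_charpoly_eval (M : Matrix (Fin n) (Fin n) ℂ) (z : ℂ) :
    (M.charpoly).eval z = (Matrix.scalar (Fin n) z - M).det := by
  rw [show M.charpoly = (charmatrix M).det from rfl, eval_det, matPolyEquiv_charmatrix,
    eval_sub, eval_X, eval_C]

theorem isospectral_flow_charpoly_const (n : ℕ) (hn : 1 ≤ n)
    (B W : ℝ → Matrix (Fin n) (Fin n) ℂ)
    (hW : ∀ t : ℝ, HasDerivAt W (B t * W t - W t * B t) t) :
    ∀ s t : ℝ, (W t).charpoly = (W s).charpoly := by
  intro s t
  apply Polynomial.funext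
  intro z
  rw [my_charpoly_eval, my_charpoly_eval]
  set A : ℝ → Matrix (Fin n) (Fin n) ℂ := fun u => Matrix.scalar (Fin n) z - W u with hA
  have hAij : ∀ (u : ℝ) (i j : Fin n),
      HasDerivAt (fun v => A v i j) ((W u * B u - B u * W u) i j) u := by
    intro u i j
    have hWij : HasDerivAt (fun v => W v i j) ((B u * W u - W u * B u) i j) u := by
      have h1 := hasDerivAt_pi.1 (hW u) i
      exact hasDerivAt_pi.1 h1 j
    have h2 := (hasDerivAt_const u (Matrix.scalar (Fin n) z i j)).sub hWij
    exact h2.congr_deriv (by rw [zero_sub, Matrix.sub_apply, Matrix.sub_apply, neg_sub])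
  have h0 : ∀ u : ℝ, HasDerivAt (fun v => (A v).det) 0 u := by
    intro u
    have hd := my_det_hasDerivAt A (W u * B u - B u * W u) u (hAij u)
    have hcomm : W u * B u - B u * W u = B u * A u - A u * B u := by
      have hc : Matrix.scalar (Fin n) z * B u = B u * Matrix.scalar (Fin n) z :=
        (Matrix.scalar_commute z (fun r => Commute.all z r) (B u)).eq
      simp only [hA, Matrix.mul_sub, Matrix.sub_mul, hc]
      abel
    rwa [my_sum_updateRow_det, hcomm, my_trace_comm] at hd
  exact is_const_of_deriv_eq_zero (fun u => (h0 u).differentiableAt)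
    (fun u => (h0 u).deriv) t s
end

section
/- Let n ≥ 1 and let P̃, W̃ be n×n complex matrices that are skew-Hermitian, i.e. P̃ᴴ = −P̃ and W̃ᴴ = −W̃. Then both matrices (I − (1/2)P̃)·W̃·(I + (1/2)P̃) and (I + (1/2)P̃)·W̃·(I − (1/2)P̃) are skew-Hermitian. -/
open Matrix

theorem midpoint_step_skewHermitian (n : ℕ) (hn : 1 ≤ n)
    (P W : Matrix (Fin n) (Fin n) ℂ) (hP : Pᴴ = -P) (hW : Wᴴ = -W) :
    ((1 - (1 / 2 : ℂ) • P) * W * (1 + (1 / 2 : ℂ) • P))ᴴ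
        = -((1 - (1 / 2 : ℂ) • P) * W * (1 + (1 / 2 : ℂ) • P)) ∧
      ((1 + (1 / 2 : ℂ) • P) * W * (1 - (1 / 2 : ℂ) • P))ᴴ
        = -((1 + (1 / 2 : ℂ) • P) * W * (1 - (1 / 2 : ℂ) • P)) := by
  have hc : star (1 / 2 : ℂ) = 1 / 2 := by
    norm_num [star_div₀, Complex.star_def]
  have hA : ((1 : Matrix (Fin n) (Fin n) ℂ) - (1 / 2 : ℂ) • P)ᴴ = 1 + (1 / 2 : ℂ) • P := by
    rw [conjTranspose_sub, conjTranspose_smul, conjTranspose_one, hP, hc, smul_neg,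
      sub_neg_eq_add]
  have hB : ((1 : Matrix (Fin n) (Fin n) ℂ) + (1 / 2 : ℂ) • P)ᴴ = 1 - (1 / 2 : ℂ) • P := by
    rw [conjTranspose_add, conjTranspose_smul, conjTranspose_one, hP, hc, smul_neg,
      ← sub_eq_add_neg]
  constructor
  · rw [conjTranspose_mul, conjTranspose_mul, hA, hB, hW]
    simp [mul_assoc]
  · rw [conjTranspose_mul, conjTranspose_mul, hA, hB, hW]
    simp [mul_assoc]
end

section
/- Let n ≥ 1 and m ≥ 0, let T_1, …, T_m be skew-Hermitian n×n complex matrices, let ν_1, …, ν_m be nonnegative reals, let P : ℝ → Matrix (Fin n) (Fin n) ℂ be any map, and let W : ℝ → Matrix (Fin n) (Fin n) ℂ be differentiable with W(t) skew-Hermitian for every t and W'(t) = [P(t), W(t)] + Σ_{i=1}^{m} ν_i [T_i, [T_i, W(t)]] for all t ∈ ℝ, where [A,B] = A·B − B·A. Then for every t, the derivative of the squared Frobenius norm s ↦ Re trace(W(s)·W(s)ᴴ) at t equals −2 Σ_{i=1}^{m} ν_i · Re trace([T_i, W(t)]·[T_i, W(t)]ᴴ); in particular the Frobenius norm of W(t)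 is nonincreasing in t. -/
open Matrix

attribute [local instance] Matrix.normedAddCommGroup Matrix.normedSpace

/-- The matrix commutator `[A, B] = A·B − B·A`. -/
noncomputable def mcomm {n : ℕ} (A B : Matrix (Fin n) (Fin n) ℂ) : Matrix (Fin n) (Fin n) ℂ :=
  A * B - B * A

lemma trace_mcomm_mul_self {n : ℕ} (A B : Matrix (Fin n) (Fin n) ℂ) :
    (mcomm A B * B).trace = 0 := by
  simp only [mcomm, Matrix.sub_mul, Matrix.trace_sub]
  rw [Matrix.mul_assoc B A B, Matrix.trace_mul_comm B (A * B)]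
  exact sub_self _

lemma mcomm_skew {n : ℕ} (T W : Matrix (Fin n) (Fin n) ℂ) (hT : Tᴴ = -T) (hW : Wᴴ = -W) :
    (mcomm T W)ᴴ = -(mcomm T W) := by
  simp only [mcomm, conjTranspose_sub, conjTranspose_mul, hT, hW]
  simp [Matrix.neg_mul, Matrix.mul_neg]

lemma trace_key {n : ℕ} (T W : Matrix (Fin n) (Fin n) ℂ) (hT : Tᴴ = -T) (hW : Wᴴ = -W) :
    (mcomm T (mcomm T W) * W).trace = (mcomm T W * (mcomm T W)ᴴ).trace := by
  set C := mcomm T W with hC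
  rw [mcomm_skew T W hT hW]
  have lhs : (mcomm T C * W).trace = -(C * C).trace := by
    simp only [mcomm, Matrix.sub_mul, Matrix.trace_sub]
    rw [Matrix.mul_assoc T C W, Matrix.trace_mul_comm T (C * W), Matrix.mul_assoc C W T,
      Matrix.mul_assoc C T W, ← Matrix.trace_sub, ← Matrix.mul_sub]
    have : W * T - T * W = -C := by rw [hC]; simp [mcomm]
    rw [this, Matrix.mul_neg, Matrix.trace_neg]
  rw [lhs, Matrix.mul_neg, Matrix.trace_neg]

lemma trace_mul_conjT_re_nonneg {n : ℕ} (C : Matrix (Fin n) (Fin n) ℂ) :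
    0 ≤ ((C * Cᴴ).trace).re := by
  have : (C * Cᴴ).trace = ∑ i, ∑ j, C i j * star (C i j) := by
    simp [Matrix.trace, Matrix.mul_apply, Matrix.diag, Matrix.conjTranspose_apply]
  rw [this]
  rw [Complex.re_sum]
  refine Finset.sum_nonneg fun i _ => ?_
  rw [Complex.re_sum]
  refine Finset.sum_nonneg fun j _ => ?_
  rw [show star (C i j) = starRingEnd ℂ (C i j) from rfl, Complex.mul_conj]
  simp [Complex.normSq_nonneg]

theorem NIDE_dissipates_frobenius_norm (n m : ℕ) (hn : 1 ≤ n)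
    (T : Fin m → Matrix (Fin n) (Fin n) ℂ) (hT : ∀ i, (T i)ᴴ = -T i)
    (ν : Fin m → ℝ) (hν : ∀ i, 0 ≤ ν i)
    (P : ℝ → Matrix (Fin n) (Fin n) ℂ)
    (W : ℝ → Matrix (Fin n) (Fin n) ℂ) (hWskew : ∀ t : ℝ, (W t)ᴴ = -W t)
    (hW : ∀ t : ℝ,
      HasDerivAt W (mcomm (P t) (W t) + ∑ i : Fin m, ν i • mcomm (T i) (mcomm (T i) (W t))) t) :
    (∀ t : ℝ,
      HasDerivAt (fun s : ℝ => ((W s * (W s)ᴴ).trace).re)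
        (-2 * ∑ i : Fin m, ν i * ((mcomm (T i) (W t) * (mcomm (T i) (W t))ᴴ).trace).re) t) ∧
    (∀ s t : ℝ, s ≤ t → ((W t * (W t)ᴴ).trace).re ≤ ((W s * (W s)ᴴ).trace).re) := by
  set D : ℝ → Matrix (Fin n) (Fin n) ℂ :=
    fun t => mcomm (P t) (W t) + ∑ i : Fin m, ν i • mcomm (T i) (mcomm (T i) (W t)) with hD
  have hder : ∀ t : ℝ,
      HasDerivAt (fun s : ℝ => ((W s * (W s)ᴴ).trace).re)
        (-2 * ∑ i : Fin m, ν i * ((mcomm (T i) (W t) * (mcomm (T i) (W t))ᴴ).trace).re) t := by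
    intro t
    have hentry : ∀ i j : Fin n, HasDerivAt (fun s => W s i j) (D t i j) t := by
      intro i j
      exact (((ContinuousLinearMap.proj (R := ℝ) (φ := fun _ : Fin n => ℂ) j).comp
        (ContinuousLinearMap.proj (R := ℝ) (φ := fun _ : Fin n => Fin n → ℂ)
          i)).hasFDerivAt.comp_hasDerivAt t (hW t))
    have hg : HasDerivAt (fun s => ∑ i : Fin n, ∑ j : Fin n, W s i j * W s j i)
        (∑ i : Fin n, ∑ j : Fin n, (D t i j * W t j i + W t i j * D t j i)) t := by
      apply HasDerivAt.fun_sum; intro i _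
      apply HasDerivAt.fun_sum; intro j _
      exact (hentry i j).mul (hentry j i)
    have hgeq : (fun s => ∑ i : Fin n, ∑ j : Fin n, W s i j * W s j i)
        = fun s => ((W s * W s).trace) := by
      funext s; simp [Matrix.trace, Matrix.mul_apply, Matrix.diag]
    rw [hgeq] at hg
    have h2 : HasDerivAt (fun s => -(((W s * W s).trace).re))
        (-((∑ i : Fin n, ∑ j : Fin n, (D t i j * W t j i + W t i j * D t j i)).re)) t :=
      (Complex.reCLM.hasFDerivAt.comp_hasDerivAt t hg).neg
    have hfun : (fun s : ℝ => ((W s * (W s)ᴴ).trace).re)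
        = fun s => -(((W s * W s).trace).re) := by
      funext s; rw [hWskew s]; simp [Matrix.mul_neg]
    rw [hfun]
    convert h2 using 1
    -- value equality
    have hsum : (∑ i : Fin n, ∑ j : Fin n, (D t i j * W t j i + W t i j * D t j i))
        = (D t * W t).trace + (W t * D t).trace := by
      simp only [Matrix.trace, Matrix.mul_apply, Matrix.diag, Finset.sum_add_distrib]
    have htr : (D t * W t).trace
        = ∑ k : Fin m, (ν k : ℂ) * (mcomm (T k) (W t) * (mcomm (T k) (W t))ᴴ).trace := by
      rw [hD]
      rw [Matrix.add_mul, Matrix.trace_add, trace_mcomm_mul_self, zero_add, Finset.sum_mul,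
        Matrix.trace_sum]
      refine Finset.sum_congr rfl fun k _ => ?_
      rw [Matrix.smul_mul, Matrix.trace_smul, trace_key (T k) (W t) (hT k) (hWskew t)]
      simp [Complex.real_smul]
    rw [hsum, Matrix.trace_mul_comm (W t) (D t), htr, ← two_mul, Complex.mul_re]
    simp only [Complex.re_ofNat, Complex.im_ofNat, Complex.re_sum, Complex.im_sum,
      Complex.mul_re, Complex.mul_im, Complex.ofReal_re, Complex.ofReal_im,
      zero_mul, mul_zero, sub_zero, zero_sub, add_zero, zero_add]
    rw [neg_mul]
  refine ⟨hder, ?_⟩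
  have hdiff : Differentiable ℝ (fun s : ℝ => ((W s * (W s)ᴴ).trace).re) :=
    fun t => (hder t).differentiableAt
  have hmono : Antitone (fun s : ℝ => ((W s * (W s)ᴴ).trace).re) := by
    apply antitone_of_deriv_nonpos hdiff
    intro t
    rw [(hder t).deriv]
    have h0 : 0 ≤ ∑ i : Fin m, ν i * ((mcomm (T i) (W t) * (mcomm (T i) (W t))ᴴ).trace).re :=
      Finset.sum_nonneg fun k _ => mul_nonneg (hν k) (trace_mul_conjT_re_nonneg _)
    linarith
  exact fun s t hst => hmono hst
end
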